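/- Let e₀, …, e₆ be the standard basis of ℂ⁷, and let m₀, m₁, m₂, m₃ be vectors in the span of e₄, e₅, e₆. Set v_j = e_j + m_j for j = 0, 1, 2, 3. Then in the exterior algebra of ℂ⁷ one has (v₀ ∧ v₁ ∧ v₂ ∧ v₃) ∧ (e₀ ∧ e₁) = 0 if and only if m₀ ∧ m₁ = 0 (equivalently, if and only if m₀ and m₁ are linearly dependent). -/

import Mathlib

open ExteriorAlgebra

/-- The standard basis of `ℂ⁷`. -/
noncomputable def stdBasis (j : Fin 7) : Fin 7 → ℂ := Pi.single j 1

namespace Stmt13Aux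

abbrev V : Type := Fin 7 → ℂ

@[simp] lemma cons_val_five {α : Type*} {m : ℕ} (x : α) (u : Fin (m+5) → α) :
    Matrix.vecCons x u 5 =
      Matrix.vecHead (Matrix.vecTail (Matrix.vecTail (Matrix.vecTail (Matrix.vecTail u)))) :=
  rfl

lemma decomp {x : V}
    (h : x ∈ Submodule.span ℂ ({stdBasis 4, stdBasis 5, stdBasis 6} : Set V)) :
    ∃ a b c : ℂ, x = a • stdBasis 4 + b • stdBasis 5 + c • stdBasis 6 := by
  rw [Submodule.mem_span_insert] at h
  obtain ⟨a, y, hy, rfl⟩ := h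
  rw [Submodule.mem_span_insert] at hy
  obtain ⟨b, z, hz, rfl⟩ := hy
  rw [Submodule.mem_span_singleton] at hz
  obtain ⟨c, rfl⟩ := hz
  exact ⟨a, b, c, by module⟩

lemma prod6 (x y z w u t : V) :
    ι ℂ x * ι ℂ y * ι ℂ z * ι ℂ w * (ι ℂ u * ι ℂ t) = ιMulti ℂ 6 ![x,y,z,w,u,t] := by
  rw [ιMulti_apply]
  simp [List.ofFn_succ, mul_assoc]

lemma dup04 (x y z w u : V) : ι ℂ x * ι ℂ y * ι ℂ z * ι ℂ w * (ι ℂ x * ι ℂ u) = 0 := by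
  rw [prod6]
  exact AlternatingMap.map_eq_zero_of_eq _ _ (i := 0) (j := 4) rfl (by decide)

lemma dup15 (x y z w u : V) : ι ℂ x * ι ℂ y * ι ℂ z * ι ℂ w * (ι ℂ u * ι ℂ y) = 0 := by
  rw [prod6]
  exact AlternatingMap.map_eq_zero_of_eq _ _ (i := 1) (j := 5) rfl (by decide)

lemma key (p q z w x y : V) :
    ι ℂ (x + p) * ι ℂ (y + q) * ι ℂ z * ι ℂ w * (ι ℂ x * ι ℂ y) =
      ι ℂ p * ι ℂ q * ι ℂ z * ι ℂ w * (ι ℂ x * ι ℂ y) := by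
  simp only [map_add, add_mul, mul_add, dup04, dup15, zero_add, add_zero]

lemma ι_anticomm (x y : V) : ι ℂ y * ι ℂ x = -(ι ℂ x * ι ℂ y) :=
  eq_neg_of_add_eq_zero_left (by rw [add_comm]; exact ι_add_mul_swap x y)

lemma wedge2 (a₀ b₀ c₀ a₁ b₁ c₁ : ℂ) :
    ι ℂ (a₀ • stdBasis 4 + b₀ • stdBasis 5 + c₀ • stdBasis 6) *
      ι ℂ (a₁ • stdBasis 4 + b₁ • stdBasis 5 + c₁ • stdBasis 6) =
      (a₀*b₁ - a₁*b₀) • (ι ℂ (stdBasis 4) * ι ℂ (stdBasis 5))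
      + (a₀*c₁ - a₁*c₀) • (ι ℂ (stdBasis 4) * ι ℂ (stdBasis 6))
      + (b₀*c₁ - b₁*c₀) • (ι ℂ (stdBasis 5) * ι ℂ (stdBasis 6)) := by
  simp only [map_add, map_smul, add_mul, mul_add, smul_mul_assoc, mul_smul_comm, smul_smul,
    ι_sq_zero, smul_zero, ι_anticomm (x := stdBasis 4) (y := stdBasis 5),
    ι_anticomm (x := stdBasis 4) (y := stdBasis 6),
    ι_anticomm (x := stdBasis 5) (y := stdBasis 6), smul_neg]
  module

def σrow : Fin 6 ≃ Fin 6 where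
  toFun := ![4,5,0,1,2,3]
  invFun := ![2,3,4,5,0,1]
  left_inv := by decide
  right_inv := by decide

noncomputable def detForm (i j : Fin 7) : V [⋀^Fin 6]→ₗ[ℂ] ℂ :=
  (Matrix.detRowAlternating.compLinearMap
    (LinearMap.funLeft ℂ ℂ (![0,1,i,j,2,3] : Fin 6 → Fin 7))).domDomCongr σrow

noncomputable def dets (i j : Fin 7) : ∀ n, V [⋀^Fin n]→ₗ[ℂ] ℂ
  | 6 => detForm i j
  | _ => 0

noncomputable def Φ (i j : Fin 7) : ExteriorAlgebra ℂ V →ₗ[ℂ] ℂ :=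
  liftAlternating (dets i j)

lemma Φ_eval (i j : Fin 7) (w : Fin 6 → V) :
    Φ i j (ιMulti ℂ 6 w) =
      Matrix.det (Matrix.of fun r c => w (σrow r) ((![0,1,i,j,2,3] : Fin 6 → Fin 7) c)) := by
  rw [Φ, liftAlternating_apply_ιMulti]
  show detForm i j w = _
  rw [detForm, AlternatingMap.domDomCongr_apply, AlternatingMap.compLinearMap_apply]
  congr

lemma det_step {n : ℕ} (M : Matrix (Fin (n+1)) (Fin (n+1)) ℂ) (h0 : M 0 0 = 1)
    (h : ∀ j, j ≠ 0 → M 0 j = 0) :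
    M.det = (M.submatrix Fin.succ Fin.succ).det := by
  rw [Matrix.det_succ_row_zero, Fin.sum_univ_succ, h0]
  rw [Finset.sum_eq_zero (fun j _ => by rw [h j.succ (Fin.succ_ne_zero j)]; ring)]
  simp [Fin.succAbove_zero]

lemma det4 (a₀ b₀ a₁ b₁ a₂ b₂ a₃ b₃ : ℂ) :
    Matrix.det !![a₀,b₀,0,0; a₁,b₁,0,0; a₂,b₂,1,0; a₃,b₃,0,1] = a₀*b₁ - a₁*b₀ := by
  simp [Matrix.det_succ_row_zero, Fin.sum_univ_succ, Fin.succAbove]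
  ring

section DetEval

variable (a₀ b₀ c₀ a₁ b₁ c₁ a₂ b₂ c₂ a₃ b₃ c₃ : ℂ)

private noncomputable def W (a₀ b₀ c₀ a₁ b₁ c₁ a₂ b₂ c₂ a₃ b₃ c₃ : ℂ) : Fin 6 → V :=
  ![stdBasis 0 + (a₀ • stdBasis 4 + b₀ • stdBasis 5 + c₀ • stdBasis 6),
    stdBasis 1 + (a₁ • stdBasis 4 + b₁ • stdBasis 5 + c₁ • stdBasis 6),
    stdBasis 2 + (a₂ • stdBasis 4 + b₂ • stdBasis 5 + c₂ • stdBasis 6),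
    stdBasis 3 + (a₃ • stdBasis 4 + b₃ • stdBasis 5 + c₃ • stdBasis 6),
    stdBasis 0, stdBasis 1]

lemma detEval45 :
    Matrix.det (Matrix.of fun r c =>
      W a₀ b₀ c₀ a₁ b₁ c₁ a₂ b₂ c₂ a₃ b₃ c₃ (σrow r) ((![0,1,4,5,2,3] : Fin 6 → Fin 7) c))
      = a₀*b₁ - a₁*b₀ := by
  rw [det_step _ (by simp [W, σrow, stdBasis, Pi.single_apply, Matrix.vecHead, Matrix.vecTail])
    (by intro k hk; fin_cases k <;>
      simp_all [W, σrow, stdBasis, Pi.single_apply, Matrix.vecHead, Matrix.vecTail])]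
  rw [det_step _ (by simp [W, σrow, stdBasis, Pi.single_apply, Matrix.vecHead, Matrix.vecTail])
    (by intro k hk; fin_cases k <;>
      simp_all [W, σrow, stdBasis, Pi.single_apply, Matrix.vecHead, Matrix.vecTail])]
  have h4 : ((Matrix.of fun r c =>
      W a₀ b₀ c₀ a₁ b₁ c₁ a₂ b₂ c₂ a₃ b₃ c₃ (σrow r)
        ((![0,1,4,5,2,3] : Fin 6 → Fin 7) c)).submatrix
       Fin.succ Fin.succ).submatrix Fin.succ Fin.succ
      = !![a₀,b₀,0,0; a₁,b₁,0,0; a₂,b₂,1,0; a₃,b₃,0,1] := by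
    ext r c
    fin_cases r <;> fin_cases c <;>
      simp [W, σrow, stdBasis, Pi.single_apply, Matrix.cons_val_succ, Matrix.vecHead,
        Matrix.vecTail]
  rw [h4, det4]

lemma detEval46 :
    Matrix.det (Matrix.of fun r c =>
      W a₀ b₀ c₀ a₁ b₁ c₁ a₂ b₂ c₂ a₃ b₃ c₃ (σrow r) ((![0,1,4,6,2,3] : Fin 6 → Fin 7) c))
      = a₀*c₁ - a₁*c₀ := by
  rw [det_step _ (by simp [W, σrow, stdBasis, Pi.single_apply, Matrix.vecHead, Matrix.vecTail])
    (by intro k hk; fin_cases k <;>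
      simp_all [W, σrow, stdBasis, Pi.single_apply, Matrix.vecHead, Matrix.vecTail])]
  rw [det_step _ (by simp [W, σrow, stdBasis, Pi.single_apply, Matrix.vecHead, Matrix.vecTail])
    (by intro k hk; fin_cases k <;>
      simp_all [W, σrow, stdBasis, Pi.single_apply, Matrix.vecHead, Matrix.vecTail])]
  have h4 : ((Matrix.of fun r c =>
      W a₀ b₀ c₀ a₁ b₁ c₁ a₂ b₂ c₂ a₃ b₃ c₃ (σrow r)
        ((![0,1,4,6,2,3] : Fin 6 → Fin 7) c)).submatrix
       Fin.succ Fin.succ).submatrix Fin.succ Fin.succ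
      = !![a₀,c₀,0,0; a₁,c₁,0,0; a₂,c₂,1,0; a₃,c₃,0,1] := by
    ext r c
    fin_cases r <;> fin_cases c <;>
      simp [W, σrow, stdBasis, Pi.single_apply, Matrix.cons_val_succ, Matrix.vecHead,
        Matrix.vecTail]
  rw [h4, det4]

lemma detEval56 :
    Matrix.det (Matrix.of fun r c =>
      W a₀ b₀ c₀ a₁ b₁ c₁ a₂ b₂ c₂ a₃ b₃ c₃ (σrow r) ((![0,1,5,6,2,3] : Fin 6 → Fin 7) c))
      = b₀*c₁ - b₁*c₀ := by
  rw [det_step _ (by simp [W, σrow, stdBasis, Pi.single_apply, Matrix.vecHead, Matrix.vecTail])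
    (by intro k hk; fin_cases k <;>
      simp_all [W, σrow, stdBasis, Pi.single_apply, Matrix.vecHead, Matrix.vecTail])]
  rw [det_step _ (by simp [W, σrow, stdBasis, Pi.single_apply, Matrix.vecHead, Matrix.vecTail])
    (by intro k hk; fin_cases k <;>
      simp_all [W, σrow, stdBasis, Pi.single_apply, Matrix.vecHead, Matrix.vecTail])]
  have h4 : ((Matrix.of fun r c =>
      W a₀ b₀ c₀ a₁ b₁ c₁ a₂ b₂ c₂ a₃ b₃ c₃ (σrow r)
        ((![0,1,5,6,2,3] : Fin 6 → Fin 7) c)).submatrix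
       Fin.succ Fin.succ).submatrix Fin.succ Fin.succ
      = !![b₀,c₀,0,0; b₁,c₁,0,0; b₂,c₂,1,0; b₃,c₃,0,1] := by
    ext r c
    fin_cases r <;> fin_cases c <;>
      simp [W, σrow, stdBasis, Pi.single_apply, Matrix.cons_val_succ, Matrix.vecHead,
        Matrix.vecTail]
  rw [h4, det4]

end DetEval

lemma not_li_of_combo {x y : V} (s t : ℂ) (hne : t ≠ 0) (h : s • x + t • y = 0) :
    ¬ LinearIndependent ℂ ![x, y] := fun hLI =>
  hne (LinearIndependent.pair_iff.mp hLI s t h).2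

end Stmt13Aux

open Stmt13Aux in
set_option maxHeartbeats 1000000 in
/-- Let `e₀, …, e₆` be the standard basis of `ℂ⁷`, let `m₀, m₁, m₂, m₃` lie in the
span of `e₄, e₅, e₆`, and set `vⱼ = eⱼ + mⱼ` for `j = 0, 1, 2, 3`.  Then
`v₀ ∧ v₁ ∧ v₂ ∧ v₃ ∧ e₀ ∧ e₁ = 0` iff `m₀ ∧ m₁ = 0`, which in turn holds iff
`m₀, m₁` are linearly dependent. -/
theorem stmt_13 (m₀ m₁ m₂ m₃ : Fin 7 → ℂ)
    (h₀ : m₀ ∈ Submodule.span ℂ ({stdBasis 4, stdBasis 5, stdBasis 6} : Set (Fin 7 → ℂ)))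
    (h₁ : m₁ ∈ Submodule.span ℂ ({stdBasis 4, stdBasis 5, stdBasis 6} : Set (Fin 7 → ℂ)))
    (h₂ : m₂ ∈ Submodule.span ℂ ({stdBasis 4, stdBasis 5, stdBasis 6} : Set (Fin 7 → ℂ)))
    (h₃ : m₃ ∈ Submodule.span ℂ ({stdBasis 4, stdBasis 5, stdBasis 6} : Set (Fin 7 → ℂ))) :
    (ExteriorAlgebra.ι ℂ (stdBasis 0 + m₀) * ExteriorAlgebra.ι ℂ (stdBasis 1 + m₁) *
        ExteriorAlgebra.ι ℂ (stdBasis 2 + m₂) * ExteriorAlgebra.ι ℂ (stdBasis 3 + m₃) *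
        (ExteriorAlgebra.ι ℂ (stdBasis 0) * ExteriorAlgebra.ι ℂ (stdBasis 1)) = 0
      ↔ ExteriorAlgebra.ι ℂ m₀ * ExteriorAlgebra.ι ℂ m₁ = 0) ∧
    (ExteriorAlgebra.ι ℂ m₀ * ExteriorAlgebra.ι ℂ m₁ = 0
      ↔ ¬ LinearIndependent ℂ ![m₀, m₁]) := by
  obtain ⟨a₀, b₀, c₀, rfl⟩ := decomp h₀
  obtain ⟨a₁, b₁, c₁, rfl⟩ := decomp h₁
  obtain ⟨a₂, b₂, c₂, rfl⟩ := decomp h₂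
  obtain ⟨a₃, b₃, c₃, rfl⟩ := decomp h₃
  set p := a₀ • stdBasis 4 + b₀ • stdBasis 5 + c₀ • stdBasis 6 with hp
  set q := a₁ • stdBasis 4 + b₁ • stdBasis 5 + c₁ • stdBasis 6 with hq
  set z := a₂ • stdBasis 4 + b₂ • stdBasis 5 + c₂ • stdBasis 6 with hz
  set w := a₃ • stdBasis 4 + b₃ • stdBasis 5 + c₃ • stdBasis 6 with hw
  clear_value p q z w
  have hkey := key p q (stdBasis 2 + z) (stdBasis 3 + w) (stdBasis 0) (stdBasis 1)
  -- the big product as an `ιMulti`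
  have hμ : ι ℂ (stdBasis 0 + p) * ι ℂ (stdBasis 1 + q) * ι ℂ (stdBasis 2 + z) *
      ι ℂ (stdBasis 3 + w) * (ι ℂ (stdBasis 0) * ι ℂ (stdBasis 1)) =
      ιMulti ℂ 6 (W a₀ b₀ c₀ a₁ b₁ c₁ a₂ b₂ c₂ a₃ b₃ c₃) := by
    rw [hp, hq, hz, hw]
    exact prod6 _ _ _ _ _ _
  -- minors vanish if the big product vanishes
  have minors : ι ℂ (stdBasis 0 + p) * ι ℂ (stdBasis 1 + q) * ι ℂ (stdBasis 2 + z) *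
      ι ℂ (stdBasis 3 + w) * (ι ℂ (stdBasis 0) * ι ℂ (stdBasis 1)) = 0 →
      (a₀*b₁ - a₁*b₀ = 0) ∧ (a₀*c₁ - a₁*c₀ = 0) ∧ (b₀*c₁ - b₁*c₀ = 0) := by
    intro hbig
    rw [hμ] at hbig
    refine ⟨?_, ?_, ?_⟩
    · have h := congrArg (Φ 4 5) hbig
      rwa [Φ_eval, map_zero, detEval45] at h
    · have h := congrArg (Φ 4 6) hbig
      rwa [Φ_eval, map_zero, detEval46] at h
    · have h := congrArg (Φ 5 6) hbig
      rwa [Φ_eval, map_zero, detEval56] at h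
  -- minors vanish implies the 2-wedge vanishes
  have wedge_of_minors : (a₀*b₁ - a₁*b₀ = 0) → (a₀*c₁ - a₁*c₀ = 0) → (b₀*c₁ - b₁*c₀ = 0) →
      ι ℂ p * ι ℂ q = 0 := by
    intro h1 h2 h3
    rw [hp, hq, wedge2, h1, h2, h3]
    simp
  constructor
  · constructor
    · intro hbig
      obtain ⟨h1, h2, h3⟩ := minors hbig
      exact wedge_of_minors h1 h2 h3
    · intro hm
      rw [hkey, hm]
      simp
  · constructor
    · intro hm
      have hbig : ι ℂ (stdBasis 0 + p) * ι ℂ (stdBasis 1 + q) * ι ℂ (stdBasis 2 + z) *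
          ι ℂ (stdBasis 3 + w) * (ι ℂ (stdBasis 0) * ι ℂ (stdBasis 1)) = 0 := by
        rw [hkey, hm]; simp
      obtain ⟨h1, h2, h3⟩ := minors hbig
      by_cases ha : a₀ = 0
      · by_cases hb : b₀ = 0
        · by_cases hc : c₀ = 0
          · intro hLI
            exact hLI.ne_zero 0 (by simp [hp, ha, hb, hc])
          · refine not_li_of_combo c₁ (-c₀) (by simpa using hc) ?_
            have hv : c₁ • p + (-c₀) • q =
                (c₁*a₀ + (-c₀)*a₁) • stdBasis 4 + (c₁*b₀ + (-c₀)*b₁) • stdBasis 5 +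
                (c₁*c₀ + (-c₀)*c₁) • stdBasis 6 := by
              rw [hp, hq]; module
            rw [hv, show c₁*a₀ + (-c₀)*a₁ = 0 by linear_combination h2,
              show c₁*b₀ + (-c₀)*b₁ = 0 by linear_combination h3,
              show c₁*c₀ + (-c₀)*c₁ = 0 by ring]
            simp
        · refine not_li_of_combo b₁ (-b₀) (by simpa using hb) ?_
          have hv : b₁ • p + (-b₀) • q =
              (b₁*a₀ + (-b₀)*a₁) • stdBasis 4 + (b₁*b₀ + (-b₀)*b₁) • stdBasis 5 +
              (b₁*c₀ + (-b₀)*c₁) • stdBasis 6 := by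
            rw [hp, hq]; module
          rw [hv, show b₁*a₀ + (-b₀)*a₁ = 0 by linear_combination h1,
            show b₁*b₀ + (-b₀)*b₁ = 0 by ring,
            show b₁*c₀ + (-b₀)*c₁ = 0 by linear_combination -h3]
          simp
      · refine not_li_of_combo a₁ (-a₀) (by simpa using ha) ?_
        have hv : a₁ • p + (-a₀) • q =
            (a₁*a₀ + (-a₀)*a₁) • stdBasis 4 + (a₁*b₀ + (-a₀)*b₁) • stdBasis 5 +
            (a₁*c₀ + (-a₀)*c₁) • stdBasis 6 := by
          rw [hp, hq]; module
        rw [hv, show a₁*a₀ + (-a₀)*a₁ = 0 by ring,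
          show a₁*b₀ + (-a₀)*b₁ = 0 by linear_combination -h1,
          show a₁*c₀ + (-a₀)*c₁ = 0 by linear_combination -h2]
        simp
    · intro hdep
      rw [LinearIndependent.pair_iff] at hdep
      push_neg at hdep
      obtain ⟨s, t, hst, hne⟩ := hdep
      by_cases hs : s = 0
      · have ht : t ≠ 0 := hne hs
        rw [hs, zero_smul, zero_add] at hst
        have hq0 : q = 0 := by
          rcases smul_eq_zero.mp hst with h | h
          · exact absurd h ht
          · exact h
        rw [hq0, map_zero, mul_zero]
      · have h0 : ι ℂ (s • p + t • q) * ι ℂ q = 0 := by rw [hst, map_zero, zero_mul]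
        rw [map_add, map_smul, map_smul, add_mul, smul_mul_assoc, smul_mul_assoc,
          ι_sq_zero, smul_zero, add_zero] at h0
        exact (smul_eq_zero.mp h0).resolve_left hs
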